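/- Let N = (𝒱, ℰ, c) be a flow network with source s and sink t, and let b ∈ 𝒱 ∖ {s, t} be a node whose only incoming edge is (a, b) with finite capacity w := c(a,b) and whose only outgoing edge is (b, v) with c(b,v) ≥ w, where a, b, v are pairwise distinct. Let N′ be the flow network obtained from N by deleting b together with its two incident edges and increasing the capacity of (a, v) by w (adding the edge (a, v) with capacity w if it was not present). Then the minimum capacity over all (s,t)-cuts of N equals the minimum capacity over all (s,t)-cuts of N′. -/

import Mathlib

open scoped ENNReal

/-- `f` is an `(s,t)`-flow for the capacity function `c`. -/
def IsFlow {ν : Type} [Fintype ν] (c : ν → ν → ℝ≥0∞) (s t : ν) (f : ν → ν → ℝ) : Prop :=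
  (∀ u v, (f u v : EReal) ≤ (c u v : EReal)) ∧
  (∀ u v, f u v = - f v u) ∧
  (∀ u, u ≠ s → u ≠ t → ∑ v, f u v = 0)

/-- The value of a flow. -/
noncomputable def flowValue {ν : Type} [Fintype ν] (f : ν → ν → ℝ) (s : ν) : ℝ :=
  ∑ v, f s v

/-- `f` is a maximum `(s,t)`-flow. -/
def IsMaxFlow {ν : Type} [Fintype ν] (c : ν → ν → ℝ≥0∞) (s t : ν) (f : ν → ν → ℝ) : Prop :=
  IsFlow c s t f ∧ ∀ g, IsFlow c s t g → flowValue g s ≤ flowValue f s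

/-- `(u,v)` is an edge of the residual network, i.e. `r_f(u,v) = c(u,v) - f(u,v) > 0`. -/
def ResidualEdge {ν : Type} (c : ν → ν → ℝ≥0∞) (f : ν → ν → ℝ) (u v : ν) : Prop :=
  (f u v : EReal) < (c u v : EReal)

open scoped Classical in
/-- The capacity of the `(s,t)`-cut `(S, 𝒱 ∖ S)`. -/
noncomputable def cutCap {ν : Type} [Fintype ν] (c : ν → ν → ℝ≥0∞) (S : Set ν) : ℝ≥0∞ :=
  ∑ u, ∑ v, if u ∈ S ∧ v ∉ S then c u v else 0

open Finset in
open scoped Classical in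
lemma mySplit {ν : Type} [Fintype ν] [DecidableEq ν] (c : ν → ν → ℝ≥0∞)
    (a b v : ν) (hab : a ≠ b)
    (hin : ∀ x, x ≠ a → c x b = 0) (hout : ∀ y, y ≠ v → c b y = 0)
    (S : Set ν) :
    cutCap c S =
      (∑ u ∈ univ.erase b, ∑ y ∈ univ.erase b, if u ∈ S ∧ y ∉ S then c u y else 0)
      + ((if b ∈ S ∧ v ∉ S then c b v else 0) + (if a ∈ S ∧ b ∉ S then c a b else 0)) := by
  unfold cutCap
  rw [← Finset.add_sum_erase _ _ (mem_univ b)]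
  have h1 : (∑ y, if b ∈ S ∧ y ∉ S then c b y else 0) = if b ∈ S ∧ v ∉ S then c b v else 0 := by
    rw [Finset.sum_eq_single_of_mem v (mem_univ v)]
    intro y _ hy
    simp [hout y hy]
  have h2 : ∀ u ∈ univ.erase b, (∑ y, if u ∈ S ∧ y ∉ S then c u y else 0)
      = (if u ∈ S ∧ b ∉ S then c u b else 0)
        + ∑ y ∈ univ.erase b, if u ∈ S ∧ y ∉ S then c u y else 0 := by
    intro u _
    exact (Finset.add_sum_erase _ (fun y => if u ∈ S ∧ y ∉ S then c u y else 0)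
      (mem_univ b)).symm
  rw [Finset.sum_congr rfl h2, Finset.sum_add_distrib]
  have h3 : (∑ u ∈ univ.erase b, if u ∈ S ∧ b ∉ S then c u b else 0)
      = if a ∈ S ∧ b ∉ S then c a b else 0 := by
    rw [Finset.sum_eq_single_of_mem a (mem_erase.mpr ⟨hab, mem_univ a⟩)]
    intro y _ hy
    simp [hin y hy]
  rw [h1, h3]
  ring

open Finset in
open scoped Classical in
lemma mySplit' {ν : Type} [Fintype ν] [DecidableEq ν] (c : ν → ν → ℝ≥0∞)
    (a b v : ν) (hab : a ≠ b) (hbv : b ≠ v)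
    (c' : {x : ν // x ≠ b} → {x : ν // x ≠ b} → ℝ≥0∞)
    (hc' : ∀ x y : {x : ν // x ≠ b},
      c' x y = if (x : ν) = a ∧ (y : ν) = v then c a v + c a b else c ↑x ↑y)
    (S' : Set {x : ν // x ≠ b}) (T : Set ν)
    (hT : ∀ (x : ν) (h : x ≠ b), (⟨x, h⟩ ∈ S' ↔ x ∈ T)) :
    cutCap c' S' =
      (∑ u ∈ univ.erase b, ∑ y ∈ univ.erase b, if u ∈ T ∧ y ∉ T then c u y else 0)
      + (if a ∈ T ∧ v ∉ T then c a b else 0) := by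
  have hmem : ∀ x : ν, x ∈ univ.erase b ↔ x ≠ b := by simp
  have key : ∀ x y : {x : ν // x ≠ b},
      (if x ∈ S' ∧ y ∉ S' then c' x y else 0)
      = (if (x : ν) ∈ T ∧ (y : ν) ∉ T then c ↑x ↑y else 0)
        + (if ((x : ν) = a ∧ (y : ν) = v) ∧ (x : ν) ∈ T ∧ (y : ν) ∉ T then c a b else 0) := by
    intro x y
    rw [hc', hT x x.2, hT y y.2]
    by_cases hm : (x : ν) ∈ T ∧ (y : ν) ∉ T
    · by_cases hx : (x : ν) = a ∧ (y : ν) = v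
      · have hc : ((x : ν) = a ∧ (y : ν) = v) ∧ (x : ν) ∈ T ∧ (y : ν) ∉ T := ⟨hx, hm⟩
        rw [if_pos hm, if_pos hx, if_pos hc, hx.1, hx.2,
          if_pos (show a ∈ T ∧ v ∉ T by rw [← hx.1, ← hx.2]; exact hm)]
      · have hc : ¬(((x : ν) = a ∧ (y : ν) = v) ∧ (x : ν) ∈ T ∧ (y : ν) ∉ T) :=
          fun h => hx h.1
        rw [if_pos hm, if_neg hx, if_neg hc, add_zero, if_pos hm]
    · simp [hm]
  unfold cutCap
  simp only [key, Finset.sum_add_distrib]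
  congr 1
  · rw [Finset.sum_subtype (univ.erase b) hmem
      (fun u => ∑ y ∈ univ.erase b, if u ∈ T ∧ y ∉ T then c u y else 0)]
    apply Finset.sum_congr rfl
    intro x _
    exact (Finset.sum_subtype (univ.erase b) hmem
      (fun y => if (x : ν) ∈ T ∧ y ∉ T then c ↑x y else 0)).symm
  · rw [Finset.sum_eq_single_of_mem (⟨a, hab⟩ : {x : ν // x ≠ b}) (mem_univ _)]
    · rw [Finset.sum_eq_single_of_mem (⟨v, Ne.symm hbv⟩ : {x : ν // x ≠ b}) (mem_univ _)]
      · simp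
      · intro y _ hy
        have : (y : ν) ≠ v := fun h => hy (Subtype.ext h)
        simp [this]
    · intro x _ hx
      have : (x : ν) ≠ a := fun h => hx (Subtype.ext h)
      simp [this]

/-- Let `b ∉ {s,t}` be a node whose only incoming edge is `(a,b)` with
finite capacity `w := c(a,b)` and whose only outgoing edge is `(b,v)` with
`c(b,v) ≥ w`, where `a, b, v` are pairwise distinct. Deleting `b` with its two incident
edges and increasing the capacity of `(a,v)` by `w` preserves the minimum
`(s,t)`-cut capacity. -/
theorem remove_series_node_min_cut {ν : Type} [Fintype ν] [DecidableEq ν]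
    (c : ν → ν → ℝ≥0∞) (s t : ν) (hst : s ≠ t)
    (a b v : ν) (hbs : b ≠ s) (hbt : b ≠ t)
    (hab : a ≠ b) (hbv : b ≠ v) (hav : a ≠ v)
    (hedge : c a b ≠ 0) (hfin : c a b ≠ ⊤)
    (hin : ∀ x : ν, x ≠ a → c x b = 0)
    (hout : ∀ y : ν, y ≠ v → c b y = 0)
    (hge : c a b ≤ c b v)
    (c' : {x : ν // x ≠ b} → {x : ν // x ≠ b} → ℝ≥0∞)
    (hc' : ∀ x y : {x : ν // x ≠ b},
      c' x y = if (x : ν) = a ∧ (y : ν) = v then c a v + c a b else c ↑x ↑y) :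
    sInf {x : ℝ≥0∞ | ∃ S : Set ν, s ∈ S ∧ t ∉ S ∧ cutCap c S = x} =
      sInf {x : ℝ≥0∞ | ∃ S' : Set {x : ν // x ≠ b},
        ⟨s, Ne.symm hbs⟩ ∈ S' ∧ ⟨t, Ne.symm hbt⟩ ∉ S' ∧ cutCap c' S' = x} := by
  classical
  apply le_antisymm
  · -- For every cut `S'` of the reduced network there is a cut of the same capacity in `N`.
    apply le_sInf
    rintro x ⟨S', hs', ht', rfl⟩
    set T : Set ν := {x | if h : x = b then (⟨v, Ne.symm hbv⟩ ∈ S') else ⟨x, h⟩ ∈ S'}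
      with hTdef
    have hT : ∀ (x : ν) (h : x ≠ b), (⟨x, h⟩ ∈ S' ↔ x ∈ T) := by
      intro x h
      simp only [hTdef, Set.mem_setOf_eq, dif_neg h]
    have hbmem : b ∈ T ↔ v ∈ T := by
      have h1 : b ∈ T ↔ (⟨v, Ne.symm hbv⟩ ∈ S') := by
        simp [hTdef]
      rw [h1, hT v (Ne.symm hbv)]
    apply sInf_le
    refine ⟨T, (hT s (Ne.symm hbs)).1 hs', fun h => ht' ((hT t (Ne.symm hbt)).2 h), ?_⟩
    rw [mySplit c a b v hab hin hout T,
      mySplit' c a b v hab hbv c' hc' S' T hT]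
    congr 1
    by_cases hv : v ∈ T
    · have hb : b ∈ T := hbmem.2 hv
      simp [hv, hb]
    · have hb : b ∉ T := fun h => hv (hbmem.1 h)
      simp [hv, hb]
  · -- Every cut of `N` induces a cut of `N'` with at most the same capacity.
    apply le_sInf
    rintro x ⟨S, hs, ht, rfl⟩
    have hT : ∀ (x : ν) (h : x ≠ b),
        ((⟨x, h⟩ : {x : ν // x ≠ b}) ∈ {y : {x : ν // x ≠ b} | (y : ν) ∈ S} ↔ x ∈ S) :=
      fun x h => Iff.rfl
    refine sInf_le_of_le ⟨{y : {x : ν // x ≠ b} | (y : ν) ∈ S}, hs, ht, rfl⟩ ?_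
    rw [mySplit c a b v hab hin hout S,
      mySplit' c a b v hab hbv c' hc' _ S hT]
    apply add_le_add_right
    by_cases hvS : v ∈ S
    · simp [hvS]
    · by_cases hbS : b ∈ S
      · by_cases haS : a ∈ S
        · have e1 : (if a ∈ S ∧ v ∉ S then c a b else 0) = c a b := if_pos ⟨haS, hvS⟩
          have e2 : (if b ∈ S ∧ v ∉ S then c b v else 0) = c b v := if_pos ⟨hbS, hvS⟩
          rw [e1, e2]
          exact le_add_right hge
        · simp [haS]
      · simp [hvS, hbS]
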